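/- Let t be an even positive integer. The t×t matrix P(t) with entries P_{i,j} = (−1)^{i+j} if i ≤ j and P_{i,j} = (−1)^{i+j+1} if i > j is nonsingular over ℝ. -/
import Mathlib

def Pmat (t : ℕ) : Matrix (Fin t) (Fin t) ℝ :=
  Matrix.of fun i j =>
    if (i : ℕ) ≤ (j : ℕ) then (-1 : ℝ) ^ ((i : ℕ) + (j : ℕ))
    else (-1 : ℝ) ^ ((i : ℕ) + (j : ℕ) + 1)

noncomputable def Qmat (t : ℕ) : Matrix (Fin t) (Fin t) ℝ :=
  Matrix.of fun j k =>
    if k = j then 1/2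
    else if (k : ℕ) = ((j : ℕ) + 1) % t then (if (j : ℕ) = t - 1 then -(1/2) else 1/2)
    else 0

lemma key (t : ℕ) (ht : 0 < t) (hev : Even t) : Qmat t * Pmat t = 1 := by
  have ht2 : 2 ≤ t := by
    rcases hev with ⟨k, rfl⟩; omega
  haveI : NeZero t := ⟨ht.ne'⟩
  ext j m
  have hval : ((j + 1 : Fin t) : ℕ) = ((j : ℕ) + 1) % t := by
    have h1 : ((1 : Fin t) : ℕ) = 1 := by
      simp [Fin.val_one', Nat.mod_eq_of_lt (by omega : 1 < t)]
    simp [Fin.add_def, h1]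
  have hne : j ≠ j + 1 := by
    intro h
    have := congrArg Fin.val h
    rw [hval] at this
    have hj := j.isLt
    rcases Nat.lt_or_ge ((j:ℕ)+1) t with h1 | h1
    · rw [Nat.mod_eq_of_lt h1] at this; omega
    · have : ((j:ℕ)+1) % t = 0 := by
        have : (j:ℕ) + 1 = t := by omega
        simp [this]
      omega
  rw [Matrix.mul_apply,
    Fintype.sum_eq_add j (j + 1) hne (fun c hc => by
      have h1 : c ≠ j := hc.1
      have h2 : (c : ℕ) ≠ ((j : ℕ) + 1) % t := by
        intro h; exact hc.2 (Fin.ext (by rw [h, hval]))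
      simp [Qmat, h1, h2])]
  have hQ1 : Qmat t j j = 1/2 := by simp [Qmat]
  have hQ2 : Qmat t j (j + 1) =
      (if (j : ℕ) = t - 1 then -(1/2) else 1/2) := by
    simp [Qmat, hne.symm, hval]
  rw [hQ1, hQ2]
  rcases Nat.lt_or_ge ((j:ℕ)+1) t with h1 | h1
  · -- j.val < t - 1 case: (j+1).val = j.val + 1
    have hjne : (j : ℕ) ≠ t - 1 := by omega
    have hv : ((j + 1 : Fin t) : ℕ) = (j : ℕ) + 1 := by
      rw [hval, Nat.mod_eq_of_lt h1]
    simp only [hjne, if_false, Pmat, Matrix.of_apply, hv, Matrix.one_apply]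
    rcases Nat.lt_trichotomy (m : ℕ) (j : ℕ) with hm | hm | hm
    · have : ¬ (j : ℕ) ≤ (m : ℕ) := by omega
      have h2 : ¬ (j : ℕ) + 1 ≤ (m : ℕ) := by omega
      have hjm : ¬ j = m := by intro h; subst h; omega
      simp only [this, h2, if_false, hjm]
      have : (j : ℕ) + 1 + (m : ℕ) + 1 = (j : ℕ) + (m : ℕ) + 1 + 1 := by ring
      rw [this, pow_succ]
      ring
    · have hjm : j = m := Fin.ext hm.symm
      subst hjm
      have h2 : ¬ (j : ℕ) + 1 ≤ (j : ℕ) := by omega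
      simp only [le_refl, if_true, h2, if_false]
      have e1 : (-1 : ℝ) ^ ((j:ℕ) + (j:ℕ)) = 1 := by
        rw [← two_mul]; exact (even_two_mul _).neg_one_pow
      have e2 : (-1 : ℝ) ^ ((j:ℕ) + 1 + (j:ℕ) + 1) = 1 := by
        have : (j:ℕ) + 1 + (j:ℕ) + 1 = 2 * ((j:ℕ)+1) := by ring
        rw [this]; exact (even_two_mul _).neg_one_pow
      rw [e1, e2]; norm_num
    · have h0 : (j : ℕ) ≤ (m : ℕ) := by omega
      have h2 : (j : ℕ) + 1 ≤ (m : ℕ) := by omega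
      have hjm : ¬ j = m := by intro h; subst h; omega
      simp only [h0, h2, if_true, hjm, if_false]
      have : (j : ℕ) + 1 + (m : ℕ) = (j : ℕ) + (m : ℕ) + 1 := by ring
      rw [this, pow_succ]
      ring
  · -- j.val = t - 1 case: (j+1).val = 0
    have hj : (j : ℕ) = t - 1 := by have := j.isLt; omega
    have hv : ((j + 1 : Fin t) : ℕ) = 0 := by
      rw [hval]
      have : (j : ℕ) + 1 = t := by have := j.isLt; omega
      simp [this]
    simp only [hj, if_true, Pmat, Matrix.of_apply, hv, Matrix.one_apply]
    have htm1 : (-1 : ℝ) ^ (t - 1) = -1 := by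
      have : Odd (t - 1) := by rcases hev with ⟨k, rfl⟩; exact ⟨k - 1, by omega⟩
      exact this.neg_one_pow
    rcases Nat.lt_or_ge (m : ℕ) (t - 1) with hm | hm
    · have h0 : ¬ (t - 1 : ℕ) ≤ (m : ℕ) := by omega
      have hjm : ¬ j = m := by intro h; subst h; omega
      simp only [h0, if_false, Nat.zero_le, if_true, Nat.zero_add, hj, hjm]
      have : t - 1 + (m : ℕ) + 1 = t + (m : ℕ) := by omega
      rw [this, pow_add, hev.neg_one_pow]
      ring
    · have hm' : (m : ℕ) = t - 1 := by have := m.isLt; omega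
      have hjm : j = m := Fin.ext (by rw [hj, hm'])
      simp only [hm', le_refl, if_true, Nat.zero_le, Nat.zero_add, hjm]
      have e1 : (-1 : ℝ) ^ (t - 1 + (t - 1)) = 1 := by
        rw [← two_mul]; exact (even_two_mul _).neg_one_pow
      rw [e1, htm1]; norm_num

theorem stmt_2 (t : ℕ) (ht : 0 < t) (hev : Even t) :
    (Pmat t).det ≠ 0 := by
  intro h
  have hk := congrArg Matrix.det (key t ht hev)
  rw [Matrix.det_mul, Matrix.det_one, h, mul_zero] at hk
  exact one_ne_zero hk.symm
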